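/- For every k ≥ 4, every vertex of the k-th generation U_k has at least one neighbor in V(G_{k-3}) (i.e., a neighbor belonging to a generation U_j with j ≤ k-3) in the Apollonian network G_k. -/

import Mathlib

/-- A family of Apollonian networks, given by a vertex set `Vert` together with a
generation labeling `gen` and an adjacency relation `adj`, satisfying the recursive
construction: the first generation `U₁` consists of three pairwise adjacent vertices
(forming `G₁`); and for each `k ≥ 1`, for each vertex `u` of generation `k` and each
adjacent pair `{x, y}` of neighbors of `u` in `G_k`, exactly one new vertex of
generation `k + 1` is created, adjacent to exactly `u`, `x`, and `y`.
The `k`-th Apollonian network `G_k` is the induced subgraph on the vertices of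
generation at most `k`. -/
structure ApollonianNetwork where
  Vert : Type
  adj : Vert → Vert → Prop
  adj_symm : ∀ a b, adj a b → adj b a
  adj_irrefl : ∀ a, ¬ adj a a
  gen : Vert → ℕ
  gen_pos : ∀ v, 1 ≤ gen v
  /-- The first generation consists of exactly three vertices. -/
  U1_card : ∃ a b c : Vert, a ≠ b ∧ a ≠ c ∧ b ≠ c ∧ {v | gen v = 1} = {a, b, c}
  /-- `G₁` is a complete graph on the first generation. -/
  U1_complete : ∀ a b, gen a = 1 → gen b = 1 → a ≠ b → adj a b
  /-- All edges join vertices of distinct generations, except within generation 1. -/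
  adj_gen : ∀ a b, adj a b → gen a = gen b → gen a = 1
  /-- Every vertex `v` of generation `k ≥ 2` is adjacent, among the vertices of earlier
  generations, to exactly three vertices `u`, `x`, `y`, where `u` has generation `k - 1`
  and `x`, `y` are neighbors of `u` in `G_{k-1}` that are adjacent to each other. -/
  created : ∀ v, 2 ≤ gen v → ∃ u x y,
    gen u = gen v - 1 ∧ gen x ≤ gen v - 1 ∧ gen y ≤ gen v - 1 ∧
    adj u x ∧ adj u y ∧ adj x y ∧
    {w | adj v w ∧ gen w < gen v} = {u, x, y}
  /-- For each `k ≥ 1`, each vertex `u` of generation `k`, and each adjacent pair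
  `{x, y}` of neighbors of `u` in `G_k`, there is exactly one vertex of generation
  `k + 1` whose neighbors in `G_{k+1}` are exactly `u`, `x`, and `y`. -/
  attach : ∀ k, 1 ≤ k → ∀ u x y,
    gen u = k → gen x ≤ k → gen y ≤ k → x ≠ y →
    adj u x → adj u y → adj x y →
    ∃! v, gen v = k + 1 ∧ {w | adj v w ∧ gen w ≤ k} = ({u, x, y} : Set Vert)

/-- The `k`-th Apollonian network `G_k`: the induced subgraph on the vertices of
generation at most `k`. -/
def ApollonianNetwork.G (A : ApollonianNetwork) (k : ℕ) :
    SimpleGraph {v : A.Vert // A.gen v ≤ k} where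
  Adj a b := A.adj a b
  symm := ⟨fun a b h => A.adj_symm a b h⟩
  loopless := ⟨fun a h => A.adj_irrefl a h⟩

theorem stmt7 (A : ApollonianNetwork) (k : ℕ) (hk : 4 ≤ k) :
    ∀ v : A.Vert, A.gen v = k → ∃ u : A.Vert, A.adj v u ∧ A.gen u ≤ k - 3 := by
  intro v hv
  have h2 : 2 ≤ A.gen v := by omega
  obtain ⟨u, x, y, hu, hx, hy, hux, huy, hxy, hset⟩ := A.created v h2
  have hadj : ∀ w ∈ ({u, x, y} : Set A.Vert), A.adj v w := by
    intro w hw; rw [← hset] at hw; exact hw.1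
  have hvu := hadj u (by simp)
  have hvx := hadj x (by simp)
  have hvy := hadj y (by simp)
  rw [hv] at hu hx hy
  by_cases c1 : A.gen u ≤ k - 3
  · exact ⟨u, hvu, c1⟩
  by_cases c2 : A.gen x ≤ k - 3
  · exact ⟨x, hvx, c2⟩
  refine ⟨y, hvy, ?_⟩
  by_cases c3 : A.gen u = A.gen x
  · have := A.adj_gen u x hux c3; omega
  by_cases c4 : A.gen u = A.gen y
  · have := A.adj_gen u y huy c4; omega
  by_cases c5 : A.gen x = A.gen y
  · have := A.adj_gen x y hxy c5; omega
  omega
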